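/- The function γ ↦ Θ(γ) is continuous on (0, ∞), where Θ(γ) is the unique maximizer of log det(Θ) over symmetric matrices Θ subject to Θ1 ⪯ D1 (first diagonal block constraint), θ2 ≤ γ (last diagonal entry constraint), and 0 ⪯ Θ ⪯ Σ, with Σ ≻ 0, D1 ≻ 0 fixed. -/

import Mathlib

open Matrix

variable {n : Type*} [Fintype n] [DecidableEq n]

lemma psd_of_isEmpty [IsEmpty n] (A : Matrix n n ℝ) : A.PosSemidef := by
  constructor
  · ext i j; exact (IsEmpty.false i).elim
  · intro x
    simp [Finsupp.sum, Subsingleton.elim x.support ∅]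

lemma psd_smul {A : Matrix n n ℝ} (hA : A.PosSemidef) {c : ℝ} (hc : 0 ≤ c) :
    (c • A).PosSemidef := by
  refine posSemidef_iff_dotProduct_mulVec.mpr ⟨?_, fun x => ?_⟩
  · unfold Matrix.IsHermitian
    rw [conjTranspose_smul]
    simp only [starRingEnd_apply, star_trivial]
    rw [hA.1]
  · have := hA.dotProduct_mulVec_nonneg x
    rw [Matrix.smul_mulVec, dotProduct_smul]
    exact smul_nonneg hc this

lemma psd_smul_one {c : ℝ} (hc : 0 ≤ c) : ((c • 1 : Matrix n n ℝ)).PosSemidef :=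
  psd_smul Matrix.PosSemidef.one hc

-- spectral helper: P posdef implies exists eps
lemma exists_sub_smul_one_psd {P : Matrix n n ℝ} (hP : P.PosDef) :
    ∃ ε : ℝ, 0 < ε ∧ ∀ δ : ℝ, 0 < δ → δ ≤ ε → (P - δ • 1).PosSemidef := by
  cases isEmpty_or_nonempty n with
  | inl h => exact ⟨1, one_pos, fun δ _ _ => psd_of_isEmpty _⟩
  | inr h =>
    have hH := hP.isHermitian
    obtain ⟨i0⟩ := h
    set ε := Finset.univ.inf' (Finset.univ_nonempty_iff.mpr ⟨i0⟩) hH.eigenvalues with hε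
    have hεpos : 0 < ε := by
      rw [hε, Finset.lt_inf'_iff]
      exact fun i _ => hP.eigenvalues_pos i
    refine ⟨ε, hεpos, fun δ hδ hδε => ?_⟩
    have key : P - δ • 1 = (hH.eigenvectorUnitary : Matrix n n ℝ) *
        (diagonal (fun i => hH.eigenvalues i - δ)) *
        (star (hH.eigenvectorUnitary : Matrix n n ℝ)) := by
      have hU : (hH.eigenvectorUnitary : Matrix n n ℝ) *
          (star (hH.eigenvectorUnitary : Matrix n n ℝ)) = 1 :=
        Matrix.mem_unitaryGroup_iff.mp hH.eigenvectorUnitary.2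
      have hdiag : (diagonal (fun i => hH.eigenvalues i - δ) : Matrix n n ℝ)
          = diagonal (RCLike.ofReal ∘ hH.eigenvalues) - δ • 1 := by
        simp [Matrix.diagonal_sub, Matrix.smul_eq_diagonal_mul]
      have hs := hH.spectral_theorem
      simp only [Unitary.conjStarAlgAut_apply, Unitary.coe_star] at hs
      rw [hdiag, Matrix.mul_sub, Matrix.sub_mul, ← hs]
      congr 1
      rw [Matrix.mul_smul, Matrix.smul_mul, Matrix.mul_one, hU]
    rw [key]
    have : (diagonal (fun i => hH.eigenvalues i - δ) : Matrix n n ℝ).PosSemidef := by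
      refine Matrix.PosSemidef.diagonal fun i => ?_
      have : ε ≤ hH.eigenvalues i := Finset.inf'_le _ (Finset.mem_univ i)
      simp only [Pi.zero_apply]
      linarith
    have := this.mul_mul_conjTranspose_same (hH.eigenvectorUnitary : Matrix n n ℝ)
    simpa [Matrix.star_eq_conjTranspose] using this

variable {n : Type*} [Fintype n] [DecidableEq n]

lemma isClosed_psd : IsClosed {A : Matrix n n ℝ | A.PosSemidef} := by
  have : {A : Matrix n n ℝ | A.PosSemidef} =
      (⋂ (i : n) (j : n), {A : Matrix n n ℝ | A j i = A i j}) ∩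
      (⋂ x : n → ℝ, {A : Matrix n n ℝ | 0 ≤ star x ⬝ᵥ A *ᵥ x}) := by
    ext A
    simp only [Set.mem_setOf_eq, Set.mem_inter_iff, Set.mem_iInter]
    constructor
    · intro hA
      exact ⟨fun i j => by
        have := hA.1
        conv_rhs => rw [← this]
        simp [Matrix.conjTranspose_apply], fun x => hA.dotProduct_mulVec_nonneg x⟩
    · intro ⟨h1, h2⟩
      refine posSemidef_iff_dotProduct_mulVec.mpr ⟨?_, h2⟩
      ext i j
      simp only [Matrix.conjTranspose_apply, star_trivial]
      exact h1 i j
  rw [this]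
  apply IsClosed.inter
  · apply isClosed_iInter; intro i; apply isClosed_iInter; intro j
    exact isClosed_eq ((continuous_id.matrix_elem j i)) ((continuous_id.matrix_elem i j))
  · apply isClosed_iInter; intro x
    exact isClosed_le continuous_const
      (continuous_const.dotProduct ((continuous_id.matrix_mulVec continuous_const)))

lemma continuous_toBlocks₁₁ {m u : Type*} :
    Continuous fun A : Matrix (m ⊕ u) (m ⊕ u) ℝ => A.toBlocks₁₁ :=
  continuous_matrix fun i j => continuous_id.matrix_elem _ _

lemma psd_diag_nonneg {A : Matrix n n ℝ} (hA : A.PosSemidef) (i : n) : 0 ≤ A i i := by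
  have := hA.dotProduct_mulVec_nonneg (Pi.single i 1)
  simpa [single_dotProduct, Matrix.mulVec_single] using this

lemma psd_offdiag_bound {A : Matrix n n ℝ} (hA : A.PosSemidef) (i j : n) :
    |A i j| ≤ A i i + A j j := by
  rcases eq_or_ne i j with rfl | hij
  · have h0 := psd_diag_nonneg hA i
    rw [abs_of_nonneg h0]; linarith
  · have hsym : A j i = A i j := by
      have := hA.1.apply i j
      simpa using this
    have key : ∀ c : ℝ, 0 ≤ A i i + c * (A i j + A j i) + c * c * A j j := by
      intro c
      have ei : n → ℝ := Pi.single i 1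
      set e1 : n → ℝ := Pi.single i 1 with he1
      set e2 : n → ℝ := Pi.single j 1 with he2
      have h := hA.dotProduct_mulVec_nonneg (e1 + c • e2)
      rw [he1, he2] at h
      simp only [star_trivial, Matrix.mulVec_add, Matrix.mulVec_smul,
        dotProduct_add, add_dotProduct, smul_dotProduct,
        dotProduct_smul, Matrix.mulVec_single, single_dotProduct,
        smul_eq_mul, mul_one, one_mul, Matrix.col_apply, MulOpposite.op_one, one_smul] at h
      -- h should now be a polynomial inequality; try nlinarith/linarith
      nlinarith [h]
    have h1 := key 1
    have hm := key (-1)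
    have hi := psd_diag_nonneg hA i
    have hj := psd_diag_nonneg hA j
    rw [abs_le]
    constructor <;> nlinarith [h1, hm, hi, hj]

lemma isCompact_box (c : ℝ) : IsCompact {A : Matrix n n ℝ | ∀ i j, A i j ∈ Set.Icc (-c) c} := by
  have : {A : Matrix n n ℝ | ∀ i j, A i j ∈ Set.Icc (-c) c} =
      Set.pi Set.univ (fun _ : n => Set.pi Set.univ fun _ : n => Set.Icc (-c) c) := by
    ext A
    constructor
    · intro h i _ j _
      exact h i j
    · intro h i j
      exact h i (Set.mem_univ i) j (Set.mem_univ j)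
  rw [this]
  exact isCompact_univ_pi fun _ => isCompact_univ_pi fun _ => isCompact_Icc

lemma isCompact_K {S : Matrix n n ℝ} (hS : S.PosSemidef) :
    IsCompact {A : Matrix n n ℝ | A.PosSemidef ∧ (S - A).PosSemidef} := by
  apply IsCompact.of_isClosed_subset (isCompact_box (2 * ∑ k, S k k))
  · have : {A : Matrix n n ℝ | A.PosSemidef ∧ (S - A).PosSemidef} =
        {A : Matrix n n ℝ | A.PosSemidef} ∩ ((fun A : Matrix n n ℝ => S - A) ⁻¹' {B | B.PosSemidef}) := rfl
    rw [this]
    exact isClosed_psd.inter (isClosed_psd.preimage (continuous_const.sub continuous_id))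
  · rintro A ⟨h1, h2⟩ i j
    have hb := psd_offdiag_bound h1 i j
    have hii : A i i ≤ S i i := by have := psd_diag_nonneg h2 i; simp [Matrix.sub_apply] at this; linarith
    have hjj : A j j ≤ S j j := by have := psd_diag_nonneg h2 j; simp [Matrix.sub_apply] at this; linarith
    have hSi : S i i ≤ ∑ k, S k k :=
      Finset.single_le_sum (f := fun k => S k k) (fun k _ => psd_diag_nonneg hS k) (Finset.mem_univ i)
    have hSj : S j j ≤ ∑ k, S k k :=
      Finset.single_le_sum (f := fun k => S k k) (fun k _ => psd_diag_nonneg hS k) (Finset.mem_univ j)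
    have := abs_le.mp (le_trans hb (by linarith : A i i + A j j ≤ 2 * ∑ k, S k k))
    rw [Set.mem_Icc]
    exact this

variable {n : Type*} [Fintype n] [DecidableEq n]

section
open scoped MatrixOrder

lemma det_midpoint_gt {A B : Matrix n n ℝ} (hA : A.PosSemidef) (hB : B.PosSemidef)
    (hdA : 0 < A.det) (hdet : B.det = A.det) (hne : B ≠ A) :
    A.det < ((1/2 : ℝ) • (A + B)).det := by
  set R := CFC.sqrt A with hR
  have hRpsd : R.PosSemidef := nonneg_iff_posSemidef.mp (CFC.sqrt_nonneg A)
  have hRR : R * R = A := CFC.sqrt_mul_sqrt_self A (nonneg_iff_posSemidef.mpr hA)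
  have hdR : R.det * R.det = A.det := by rw [← det_mul, hRR]
  have hRdet : R.det ≠ 0 := by
    intro h; rw [h, mul_zero] at hdR; exact hdA.ne (by linarith)
  have hRu : IsUnit R.det := isUnit_iff_ne_zero.mpr hRdet
  have hRinvH : (R⁻¹).IsHermitian := hRpsd.1.inv
  set N := R⁻¹ * B * R⁻¹ with hN
  have hNpsd : N.PosSemidef := by
    have := hB.mul_mul_conjTranspose_same R⁻¹
    rwa [hRinvH.eq] at this
  have hBr : B = R * N * R := by
    rw [hN]
    rw [Matrix.mul_assoc, Matrix.mul_assoc, Matrix.nonsing_inv_mul _ hRu, Matrix.mul_one,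
      ← Matrix.mul_assoc, Matrix.mul_nonsing_inv _ hRu, Matrix.one_mul]
  have hdetN : N.det = 1 := by
    have h0 : B.det = A.det * N.det := by
      rw [hBr, det_mul, det_mul, ← hdR]; ring
    have h2 : A.det * 1 = A.det * N.det := by
      rw [mul_one]
      conv_lhs => rw [← hdet]
      exact h0
    exact (mul_left_cancel₀ (ne_of_gt hdA) h2).symm
  have hNH : N.IsHermitian := hNpsd.1
  set μ := hNH.eigenvalues with hμ
  have hμnonneg : ∀ i, 0 ≤ μ i := hNpsd.eigenvalues_nonneg
  have hprodμ : ∏ i, μ i = 1 := by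
    have := hNH.det_eq_prod_eigenvalues
    rw [hdetN] at this
    exact_mod_cast this.symm
  have hμpos : ∀ i, 0 < μ i := by
    intro i
    rcases lt_or_eq_of_le (hμnonneg i) with h | h
    · exact h
    · exfalso
      have : ∏ j, μ j = 0 := Finset.prod_eq_zero (Finset.mem_univ i) h.symm
      rw [hprodμ] at this; norm_num at this
  -- N ≠ 1
  have hNne1 : N ≠ 1 := by
    intro h
    apply hne
    rw [hBr, h, Matrix.mul_one, hRR]
  -- some eigenvalue ≠ 1
  have hexi : ∃ i, μ i ≠ 1 := by
    by_contra h
    push_neg at h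
    apply hNne1
    have h1 : diagonal (RCLike.ofReal ∘ μ) = (1 : Matrix n n ℝ) := by
      rw [show (RCLike.ofReal ∘ μ : n → ℝ) = fun _ => 1 from funext fun i => by simp [h i],
        Matrix.diagonal_one]
    have h2 := hNH.spectral_theorem
    simp only [Unitary.conjStarAlgAut_apply, Unitary.coe_star] at h2
    rw [← hμ, h1, Matrix.mul_one] at h2
    rw [h2]
    exact Matrix.mem_unitaryGroup_iff.mp hNH.eigenvectorUnitary.2
  -- det of midpoint
  have hmid : (1/2 : ℝ) • (A + B) = R * ((1/2 : ℝ) • (1 + N)) * R := by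
    rw [Matrix.mul_smul, Matrix.smul_mul]
    congr 1
    rw [Matrix.mul_add, Matrix.add_mul, Matrix.mul_one, hRR, ← hBr]
  have hdiagform : (1/2 : ℝ) • (1 + N) =
      (hNH.eigenvectorUnitary : Matrix n n ℝ) * diagonal (fun i => (1 + μ i)/2) *
        (star (hNH.eigenvectorUnitary : Matrix n n ℝ)) := by
    have hU : (hNH.eigenvectorUnitary : Matrix n n ℝ) *
        (star (hNH.eigenvectorUnitary : Matrix n n ℝ)) = 1 :=
      Matrix.mem_unitaryGroup_iff.mp hNH.eigenvectorUnitary.2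
    have h1 : (diagonal (fun i => (1 + μ i)/2) : Matrix n n ℝ)
        = (1/2 : ℝ) • (1 + diagonal (RCLike.ofReal ∘ μ)) := by
      ext i j
      by_cases hij : i = j
      · subst hij
        simp [Matrix.diagonal_apply_eq, Matrix.one_apply_eq]
        ring
      · simp [Matrix.diagonal_apply_ne _ hij, Matrix.one_apply_ne hij]
    rw [h1]
    rw [Matrix.mul_smul, Matrix.smul_mul]
    congr 1
    have hs := hNH.spectral_theorem
    simp only [Unitary.conjStarAlgAut_apply, Unitary.coe_star] at hs
    rw [Matrix.mul_add, Matrix.add_mul, Matrix.mul_one, hU, ← hs]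
  have hdetmid : ((1/2 : ℝ) • (A + B)).det = A.det * ∏ i, (1 + μ i)/2 := by
    rw [hmid, det_mul, det_mul, hdiagform, det_mul, det_mul]
    rw [Matrix.det_diagonal]
    have hUdet : (hNH.eigenvectorUnitary : Matrix n n ℝ).det *
        (star (hNH.eigenvectorUnitary : Matrix n n ℝ)).det = 1 := by
      rw [← det_mul]
      rw [Matrix.mem_unitaryGroup_iff.mp hNH.eigenvectorUnitary.2]
      exact det_one
    rw [← hdR]
    linear_combination (R.det * R.det * (∏ i, (1 + μ i)/2)) * hUdet
  rw [hdetmid]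
  have hs : ∏ i, Real.sqrt (μ i) = 1 := by
    have hsq : (∏ i, Real.sqrt (μ i)) * (∏ i, Real.sqrt (μ i)) = 1 := by
      rw [← Finset.prod_mul_distrib]
      rw [show (fun i => Real.sqrt (μ i) * Real.sqrt (μ i)) = fun i => μ i from
        funext fun i => Real.mul_self_sqrt (hμnonneg i)]
      exact hprodμ
    have hnn : 0 ≤ ∏ i, Real.sqrt (μ i) := Finset.prod_nonneg fun i _ => Real.sqrt_nonneg _
    rcases mul_self_eq_one_iff.mp hsq with h | h
    · exact h
    · exfalso; rw [h] at hnn; linarith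
  obtain ⟨i0, hi0⟩ := hexi
  have hlt : ∏ i, Real.sqrt (μ i) < ∏ i, (1 + μ i)/2 := by
    apply Finset.prod_lt_prod (fun i _ => Real.sqrt_pos.mpr (hμpos i))
    · intro i _
      nlinarith [sq_nonneg (Real.sqrt (μ i) - 1), Real.sq_sqrt (hμnonneg i)]
    · refine ⟨i0, Finset.mem_univ i0, ?_⟩
      have ht : Real.sqrt (μ i0) ≠ 1 := by
        intro h
        apply hi0
        have := Real.sq_sqrt (hμnonneg i0)
        rw [h] at this
        simpa using this.symm
      have h2 : 0 < (Real.sqrt (μ i0) - 1)^2 := by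
        have := sub_ne_zero.mpr ht
        positivity
      nlinarith [Real.sq_sqrt (hμnonneg i0), h2]
  have hgt1 : 1 < ∏ i, (1 + μ i)/2 := hs ▸ hlt
  nlinarith [hdA, hgt1]

end

section Main

variable {m : ℕ}

local notation "ι" => (Fin m ⊕ Unit)

def StmtFeas (S : Matrix (Fin m ⊕ Unit) (Fin m ⊕ Unit) ℝ) (D1 : Matrix (Fin m) (Fin m) ℝ)
    (γ : ℝ) (Θ : Matrix (Fin m ⊕ Unit) (Fin m ⊕ Unit) ℝ) : Prop :=
  Θ.IsSymm ∧ (D1 - Θ.toBlocks₁₁).PosSemidef ∧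
    Θ (Sum.inr ()) (Sum.inr ()) ≤ γ ∧ Θ.PosSemidef ∧ (S - Θ).PosSemidef

variable {S : Matrix (Fin m ⊕ Unit) (Fin m ⊕ Unit) ℝ} {D1 : Matrix (Fin m) (Fin m) ℝ}

lemma toBlocks₁₁_sub (A B : Matrix (Fin m ⊕ Unit) (Fin m ⊕ Unit) ℝ) :
    (A - B).toBlocks₁₁ = A.toBlocks₁₁ - B.toBlocks₁₁ := rfl

lemma stmtFeas_comb {γ : ℝ} {A B : Matrix (Fin m ⊕ Unit) (Fin m ⊕ Unit) ℝ}
    (hA : StmtFeas S D1 γ A) (hB : StmtFeas S D1 γ B) :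
    StmtFeas S D1 γ ((1/2 : ℝ) • (A + B)) := by
  obtain ⟨hA1, hA2, hA3, hA4, hA5⟩ := hA
  obtain ⟨hB1, hB2, hB3, hB4, hB5⟩ := hB
  refine ⟨?_, ?_, ?_, ?_, ?_⟩
  · unfold Matrix.IsSymm at *
    rw [Matrix.transpose_smul, Matrix.transpose_add, hA1, hB1]
  · have heq : D1 - ((1/2 : ℝ) • (A + B)).toBlocks₁₁ =
        (1/2 : ℝ) • (D1 - A.toBlocks₁₁) + (1/2 : ℝ) • (D1 - B.toBlocks₁₁) := by
      ext i j
      simp [Matrix.toBlocks₁₁, Matrix.sub_apply, Matrix.smul_apply, Matrix.add_apply]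
      ring
    rw [heq]
    exact (psd_smul hA2 (by norm_num)).add (psd_smul hB2 (by norm_num))
  · have : ((1/2 : ℝ) • (A + B)) (Sum.inr ()) (Sum.inr ())
        = (1/2) * (A (Sum.inr ()) (Sum.inr ()) + B (Sum.inr ()) (Sum.inr ())) := rfl
    rw [this]; linarith
  · exact psd_smul (hA4.add hB4) (by norm_num)
  · have heq : S - (1/2 : ℝ) • (A + B) =
        (1/2 : ℝ) • (S - A) + (1/2 : ℝ) • (S - B) := by
      ext i j
      simp [Matrix.sub_apply, Matrix.smul_apply, Matrix.add_apply]
      ring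
    rw [heq]
    exact (psd_smul hA5 (by norm_num)).add (psd_smul hB5 (by norm_num))

lemma stmtFeas_smul (hS : S.PosDef) (hD1 : D1.PosDef) {γ γ' t : ℝ}
    {Θ : Matrix (Fin m ⊕ Unit) (Fin m ⊕ Unit) ℝ} (hΘ : StmtFeas S D1 γ Θ)
    (ht0 : 0 ≤ t) (ht1 : t ≤ 1) (htγ : t * γ ≤ γ') :
    StmtFeas S D1 γ' (t • Θ) := by
  obtain ⟨h1, h2, h3, h4, h5⟩ := hΘ
  refine ⟨?_, ?_, ?_, psd_smul h4 ht0, ?_⟩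
  · unfold Matrix.IsSymm at *
    rw [Matrix.transpose_smul, h1]
  · have heq : D1 - (t • Θ).toBlocks₁₁ = (1 - t) • D1 + t • (D1 - Θ.toBlocks₁₁) := by
      ext i j
      simp [Matrix.toBlocks₁₁, Matrix.sub_apply, Matrix.smul_apply, Matrix.add_apply]
      ring
    rw [heq]
    exact (psd_smul hD1.posSemidef (by linarith)).add (psd_smul h2 ht0)
  · have : (t • Θ) (Sum.inr ()) (Sum.inr ()) = t * Θ (Sum.inr ()) (Sum.inr ()) := rfl
    rw [this]
    exact le_trans (mul_le_mul_of_nonneg_left h3 ht0) htγ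
  · have heq : S - t • Θ = (1 - t) • S + t • (S - Θ) := by
      ext i j
      simp [Matrix.sub_apply, Matrix.smul_apply, Matrix.add_apply]
      ring
    rw [heq]
    exact (psd_smul hS.posSemidef (by linarith)).add (psd_smul h5 ht0)

lemma stmtFeas_exists_pos (hS : S.PosDef) (hD1 : D1.PosDef) {γ : ℝ} (hγ : 0 < γ) :
    ∃ C : Matrix (Fin m ⊕ Unit) (Fin m ⊕ Unit) ℝ, StmtFeas S D1 γ C ∧ 0 < C.det := by
  obtain ⟨εS, hεS, hεSp⟩ := exists_sub_smul_one_psd hS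
  obtain ⟨εD, hεD, hεDp⟩ := exists_sub_smul_one_psd hD1
  set ε := min (min εS εD) γ with hε
  have hεpos : 0 < ε := lt_min (lt_min hεS hεD) hγ
  refine ⟨ε • 1, ⟨?_, ?_, ?_, psd_smul_one hεpos.le, ?_⟩, ?_⟩
  · unfold Matrix.IsSymm
    rw [Matrix.transpose_smul, Matrix.transpose_one]
  · have heq : ((ε • 1 : Matrix (Fin m ⊕ Unit) (Fin m ⊕ Unit) ℝ)).toBlocks₁₁
        = (ε • 1 : Matrix (Fin m) (Fin m) ℝ) := by
      ext i j
      simp [Matrix.toBlocks₁₁, Matrix.one_apply, Sum.inl.injEq]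
    rw [heq]
    exact hεDp ε hεpos (le_trans (min_le_left _ _) (min_le_right _ _))
  · have : ((ε • 1 : Matrix (Fin m ⊕ Unit) (Fin m ⊕ Unit) ℝ)) (Sum.inr ()) (Sum.inr ()) = ε := by
      simp [Matrix.one_apply]
    rw [this]
    exact min_le_right _ _
  · exact hεSp ε hεpos (le_trans (min_le_left _ _) (min_le_left _ _))
  · rw [Matrix.det_smul, Matrix.det_one, mul_one]
    positivity

lemma stmtFeas_unique (hS : S.PosDef) (hD1 : D1.PosDef) {γ : ℝ} (hγ : 0 < γ)
    {A B : Matrix (Fin m ⊕ Unit) (Fin m ⊕ Unit) ℝ}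
    (hA : StmtFeas S D1 γ A) (hB : StmtFeas S D1 γ B)
    (hmax : ∀ Θ, StmtFeas S D1 γ Θ → Θ.det ≤ A.det) (hdet : B.det = A.det) : B = A := by
  obtain ⟨C, hC, hCdet⟩ := stmtFeas_exists_pos hS hD1 hγ
  have hdA : 0 < A.det := lt_of_lt_of_le hCdet (hmax C hC)
  by_contra hne
  have hgt := det_midpoint_gt hA.2.2.2.1 hB.2.2.2.1 hdA hdet hne
  have hle := hmax _ (stmtFeas_comb hA hB)
  linarith

lemma isClosed_stmtFeas0 :
    IsClosed {Θ : Matrix (Fin m ⊕ Unit) (Fin m ⊕ Unit) ℝ |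
      Θ.IsSymm ∧ (D1 - Θ.toBlocks₁₁).PosSemidef ∧ Θ.PosSemidef ∧ (S - Θ).PosSemidef} := by
  have h1 : IsClosed {Θ : Matrix (Fin m ⊕ Unit) (Fin m ⊕ Unit) ℝ | Θ.IsSymm} :=
    isClosed_eq (continuous_id.matrix_transpose) continuous_id
  have h2 : IsClosed {Θ : Matrix (Fin m ⊕ Unit) (Fin m ⊕ Unit) ℝ |
      (D1 - Θ.toBlocks₁₁).PosSemidef} :=
    isClosed_psd.preimage (continuous_const.sub continuous_toBlocks₁₁)
  have h3 : IsClosed {Θ : Matrix (Fin m ⊕ Unit) (Fin m ⊕ Unit) ℝ | Θ.PosSemidef} := isClosed_psd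
  have h4 : IsClosed {Θ : Matrix (Fin m ⊕ Unit) (Fin m ⊕ Unit) ℝ | (S - Θ).PosSemidef} :=
    isClosed_psd.preimage (continuous_const.sub continuous_id)
  have : {Θ : Matrix (Fin m ⊕ Unit) (Fin m ⊕ Unit) ℝ |
      Θ.IsSymm ∧ (D1 - Θ.toBlocks₁₁).PosSemidef ∧ Θ.PosSemidef ∧ (S - Θ).PosSemidef} =
      {Θ | Θ.IsSymm} ∩ ({Θ | (D1 - Θ.toBlocks₁₁).PosSemidef} ∩
        ({Θ | Θ.PosSemidef} ∩ {Θ | (S - Θ).PosSemidef})) := rfl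
  rw [this]
  exact h1.inter (h2.inter (h3.inter h4))

lemma key_tendsto (hS : S.PosDef) (hD1 : D1.PosDef)
    (T : ℝ → Matrix (Fin m ⊕ Unit) (Fin m ⊕ Unit) ℝ)
    (hT : ∀ γ : ℝ, 0 < γ → StmtFeas S D1 γ (T γ) ∧
      ∀ Θ, StmtFeas S D1 γ Θ → Θ.det ≤ (T γ).det)
    {γ₀ : ℝ} (hγ₀ : 0 < γ₀) {v : ℕ → ℝ} (hv : ∀ k, 0 < v k)
    (hvt : Filter.Tendsto v Filter.atTop (nhds γ₀)) :
    Filter.Tendsto (fun k => T (v k)) Filter.atTop (nhds (T γ₀)) := by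
  haveI : FirstCountableTopology (Matrix (Fin m ⊕ Unit) (Fin m ⊕ Unit) ℝ) :=
    inferInstanceAs (FirstCountableTopology ((Fin m ⊕ Unit) → (Fin m ⊕ Unit) → ℝ))
  obtain ⟨hfeas₀, hmax₀⟩ := hT γ₀ hγ₀
  set d := (T γ₀).det with hd
  apply Filter.tendsto_of_subseq_tendsto
  intro ns hns
  have hK : IsCompact {A : Matrix (Fin m ⊕ Unit) (Fin m ⊕ Unit) ℝ |
      A.PosSemidef ∧ (S - A).PosSemidef} := isCompact_K hS.posSemidef
  have hmem : ∀ k : ℕ, T (v (ns k)) ∈ {A : Matrix (Fin m ⊕ Unit) (Fin m ⊕ Unit) ℝ |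
      A.PosSemidef ∧ (S - A).PosSemidef} :=
    fun k => ⟨(hT _ (hv _)).1.2.2.2.1, (hT _ (hv _)).1.2.2.2.2⟩
  obtain ⟨x, hxK, φ, hφ, hxlim⟩ := hK.tendsto_subseq hmem
  refine ⟨φ, ?_⟩
  suffices hx : x = T γ₀ by
    rw [← hx]
    exact hxlim
  set w : ℕ → ℝ := fun k => v (ns (φ k)) with hw
  have hwt : Filter.Tendsto w Filter.atTop (nhds γ₀) := hvt.comp (hns.comp hφ.tendsto_atTop)
  have hwpos : ∀ k, 0 < w k := fun k => hv _
  have hUlim : Filter.Tendsto (fun k => T (w k)) Filter.atTop (nhds x) := hxlim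
  have hxfeas0 : x ∈ {Θ : Matrix (Fin m ⊕ Unit) (Fin m ⊕ Unit) ℝ |
      Θ.IsSymm ∧ (D1 - Θ.toBlocks₁₁).PosSemidef ∧ Θ.PosSemidef ∧ (S - Θ).PosSemidef} := by
    apply isClosed_stmtFeas0.mem_of_tendsto hUlim
    filter_upwards with k
    obtain ⟨h1, h2, _, h4, h5⟩ := (hT _ (hwpos k)).1
    exact ⟨h1, h2, h4, h5⟩
  have hxentry : x (Sum.inr ()) (Sum.inr ()) ≤ γ₀ := by
    have hcoord : Filter.Tendsto (fun k => T (w k) (Sum.inr ()) (Sum.inr ()))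
        Filter.atTop (nhds (x (Sum.inr ()) (Sum.inr ()))) :=
      ((continuous_id.matrix_elem (Sum.inr ()) (Sum.inr ())).tendsto x).comp hUlim
    exact le_of_tendsto_of_tendsto' hcoord hwt fun k => (hT _ (hwpos k)).1.2.2.1
  have hxfeas : StmtFeas S D1 γ₀ x :=
    ⟨hxfeas0.1, hxfeas0.2.1, hxentry, hxfeas0.2.2.1, hxfeas0.2.2.2⟩
  have hdetlim : Filter.Tendsto (fun k => (T (w k)).det) Filter.atTop (nhds x.det) :=
    ((continuous_id.matrix_det).tendsto x).comp hUlim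
  have hlow : ∀ k, (min 1 (w k / γ₀))^(Fintype.card (Fin m ⊕ Unit)) * d ≤ (T (w k)).det := by
    intro k
    have ht0 : 0 < min 1 (w k / γ₀) := lt_min one_pos (div_pos (hwpos k) hγ₀)
    have ht1 : min 1 (w k / γ₀) ≤ 1 := min_le_left _ _
    have htγ : (min 1 (w k / γ₀)) * γ₀ ≤ w k := by
      rcases min_cases 1 (w k / γ₀) with ⟨h, hle⟩ | ⟨h, hlt⟩
      · rw [h, one_mul]
        exact (one_le_div hγ₀).mp hle
      · rw [h, div_mul_cancel₀ _ (ne_of_gt hγ₀)]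
    have := (hT (w k) (hwpos k)).2 _ (stmtFeas_smul hS hD1 hfeas₀ ht0.le ht1 htγ)
    rwa [Matrix.det_smul] at this
  have hlowlim : Filter.Tendsto
      (fun k => (min 1 (w k / γ₀))^(Fintype.card (Fin m ⊕ Unit)) * d)
      Filter.atTop (nhds d) := by
    have h1 : Filter.Tendsto (fun k => w k / γ₀) Filter.atTop (nhds (γ₀ / γ₀)) :=
      hwt.div_const γ₀
    rw [div_self (ne_of_gt hγ₀)] at h1
    have h2 : Filter.Tendsto (fun k => min 1 (w k / γ₀)) Filter.atTop (nhds (min 1 1)) :=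
      Filter.Tendsto.min tendsto_const_nhds h1
    rw [min_self] at h2
    have h3 := (h2.pow (Fintype.card (Fin m ⊕ Unit))).mul_const d
    simpa using h3
  have hxged : d ≤ x.det := le_of_tendsto_of_tendsto' hlowlim hdetlim hlow
  have hxled : x.det ≤ d := hmax₀ x hxfeas
  exact stmtFeas_unique hS hD1 hγ₀ hfeas₀ hxfeas hmax₀ (le_antisymm hxled hxged)

end Main

theorem stmt_10 {m : ℕ}
    (S : Matrix (Fin m ⊕ Unit) (Fin m ⊕ Unit) ℝ)
    (D1 : Matrix (Fin m) (Fin m) ℝ)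
    (hS : S.PosDef) (hD1 : D1.PosDef)
    (T : ℝ → Matrix (Fin m ⊕ Unit) (Fin m ⊕ Unit) ℝ)
    (hT : ∀ γ : ℝ, 0 < γ →
      ((T γ).IsSymm ∧ (D1 - (T γ).toBlocks₁₁).PosSemidef ∧
        (T γ) (Sum.inr ()) (Sum.inr ()) ≤ γ ∧
        (T γ).PosSemidef ∧ (S - T γ).PosSemidef) ∧
      ∀ Θ : Matrix (Fin m ⊕ Unit) (Fin m ⊕ Unit) ℝ,
        (Θ.IsSymm ∧ (D1 - Θ.toBlocks₁₁).PosSemidef ∧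
          Θ (Sum.inr ()) (Sum.inr ()) ≤ γ ∧
          Θ.PosSemidef ∧ (S - Θ).PosSemidef) →
        Θ.det ≤ (T γ).det) :
    ContinuousOn T (Set.Ioi 0) := by
  have hT' : ∀ γ : ℝ, 0 < γ → StmtFeas S D1 γ (T γ) ∧
      ∀ Θ, StmtFeas S D1 γ Θ → Θ.det ≤ (T γ).det := hT
  intro γ₀ hγ₀
  have hγ0 : (0:ℝ) < γ₀ := hγ₀
  unfold ContinuousWithinAt
  rw [Filter.tendsto_iff_seq_tendsto]
  intro u hu
  have hu1 : Filter.Tendsto u Filter.atTop (nhds γ₀) := hu.mono_right nhdsWithin_le_nhds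
  have hev : ∀ᶠ k in Filter.atTop, γ₀/2 < u k :=
    hu1.eventually (eventually_gt_nhds (by linarith))
  set v : ℕ → ℝ := fun k => max (u k) (γ₀/2) with hvdef
  have hvpos : ∀ k, 0 < v k := fun k => lt_of_lt_of_le (by linarith) (le_max_right _ _)
  have hvt : Filter.Tendsto v Filter.atTop (nhds γ₀) := by
    have h := hu1.max (tendsto_const_nhds (x := γ₀/2))
    rw [max_eq_left (by linarith : γ₀/2 ≤ γ₀)] at h
    exact h
  have hkey := key_tendsto hS hD1 T hT' hγ0 hvpos hvt
  apply hkey.congr'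
  filter_upwards [hev] with k hk
  have : v k = u k := max_eq_left hk.le
  rw [this]
  rfl
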